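/- Fix reals α > 0 and 0 < β < 1 and an integer l ≥ 1, and define τ*(p^j, p^k) = 1 if k ≤ jl, and τ*(p^j, p^k) = −α p^{−β(k − jl)} otherwise. Let p be a prime and μ a real constant with 1 > μ ≥ (α + 1)/(α + p^β). Then for any positive integers s and k, ∑_{j=0}^{s} μ^j τ*(p^j, p^k) ≥ −μ^{s+1}/(1 − μ). -/

import Mathlib

/-- `τ*(p^j, p^k) = 1` if `k ≤ jl`, and `−a p^{−b(k − jl)}` otherwise. -/
noncomputable def taustar (a b : ℝ) (l p j k : ℕ) : ℝ :=
  if k ≤ j * l then 1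
  else -(a * (p : ℝ) ^ (-(b * ((k : ℝ) - (j : ℝ) * (l : ℝ)))))

set_option maxHeartbeats 1000000 in
/-- If `p` is a prime and `1 > μ ≥ (a + 1)/(a + p^b)`, then for all
positive integers `s, k`: `∑_{j=0}^{s} μ^j τ*(p^j, p^k) ≥ −μ^{s+1}/(1 − μ)`. -/
theorem stmt_14 (a b : ℝ) (l : ℕ) (ha : 0 < a) (hb0 : 0 < b) (hb1 : b < 1) (hl : 1 ≤ l)
    (p : ℕ) (hp : p.Prime) (μ : ℝ) (hμ1 : μ < 1)
    (hμ2 : (a + 1) / (a + (p : ℝ) ^ b) ≤ μ) :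
    ∀ s k : ℕ, 1 ≤ s → 1 ≤ k →
      -(μ ^ (s + 1) / (1 - μ)) ≤
        ∑ j ∈ Finset.range (s + 1), μ ^ j * taustar a b l p j k := by
  intro s k hs hk
  have hp2 : (2:ℝ) ≤ (p:ℝ) := by exact_mod_cast hp.two_le
  have hp0 : (0:ℝ) < (p:ℝ) := by linarith
  have hp1 : (1:ℝ) < (p:ℝ) := by linarith
  have hpb1 : 1 < (p:ℝ) ^ b :=
    (Real.one_lt_rpow_iff hp0.le).mpr (Or.inl ⟨hp1, hb0⟩)
  have hμ0 : 0 < μ := lt_of_lt_of_le (by positivity) hμ2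
  have h1μ : 0 < 1 - μ := by linarith
  have hkey : a * (1 - μ) ≤ μ * (p:ℝ) ^ b - 1 := by
    have h := (div_le_iff₀ (by linarith : (0:ℝ) < a + (p:ℝ) ^ b)).mp hμ2
    nlinarith
  have hl1 : (1:ℝ) ≤ (l:ℝ) := by exact_mod_cast hl
  set g : ℕ → ℝ := fun j =>
    μ ^ j * (p:ℝ) ^ (-(b * max ((k:ℝ) - (j:ℝ) * (l:ℝ)) 0)) with hg
  have hgpos : ∀ j, 0 < g j := by
    intro j; rw [hg]; positivity
  have hterm : ∀ j : ℕ, (g j - g (j+1)) / (1 - μ) ≤ μ ^ j * taustar a b l p j k := by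
    intro j
    unfold taustar
    by_cases hc : k ≤ j * l
    · simp only [if_pos hc]
      have h1 : ((k:ℝ) - (j:ℝ) * (l:ℝ)) ≤ 0 := by
        have : (k:ℝ) ≤ (j:ℝ) * (l:ℝ) := by exact_mod_cast hc
        linarith
      have h2 : ((k:ℝ) - ((j:ℕ)+1 : ℝ) * (l:ℝ)) ≤ 0 := by nlinarith
      have e1 : g j = μ ^ j := by
        rw [hg]; simp [max_eq_right h1]
      have e2 : g (j+1) = μ ^ (j+1) := by
        rw [hg]; push_cast; simp [max_eq_right h2]
      rw [e1, e2]
      rw [div_le_iff₀ h1μ]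
      ring_nf
      nlinarith [pow_pos hμ0 j]
    · simp only [if_neg hc]
      have hjl : (j:ℝ) * (l:ℝ) + 1 ≤ (k:ℝ) := by
        have : j * l + 1 ≤ k := Nat.lt_of_not_le hc
        exact_mod_cast this
      set E : ℝ := (p:ℝ) ^ (-(b * ((k:ℝ) - (j:ℝ) * (l:ℝ)))) with hE
      have hEpos : 0 < E := by rw [hE]; positivity
      have e1 : g j = μ ^ j * E := by
        simp only [hg, hE]
        rw [max_eq_left (by linarith : (0:ℝ) ≤ (k:ℝ) - (j:ℝ) * (l:ℝ))]
      have hM : max ((k:ℝ) - ((j:ℝ)+1) * (l:ℝ)) 0 ≤ ((k:ℝ) - (j:ℝ) * (l:ℝ)) - 1 := by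
        apply max_le <;> nlinarith
      have hE' : (p:ℝ) ^ b * E ≤ (p:ℝ) ^ (-(b * max ((k:ℝ) - ((j:ℝ)+1) * (l:ℝ)) 0)) := by
        rw [hE, ← Real.rpow_add hp0]
        apply Real.rpow_le_rpow_left_iff hp1 |>.mpr
        nlinarith
      have e2 : μ ^ j * E * (μ * (p:ℝ) ^ b) ≤ g (j+1) := by
        have : g (j+1) = μ ^ (j+1) * (p:ℝ) ^ (-(b * max ((k:ℝ) - ((j:ℝ)+1) * (l:ℝ)) 0)) := by
          rw [hg]; push_cast; ring_nf
        rw [this, pow_succ]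
        nlinarith [mul_le_mul_of_nonneg_left hE'
          (show (0:ℝ) ≤ μ ^ j * μ by positivity)]
      rw [e1, div_le_iff₀ h1μ]
      have hpos : 0 < μ ^ j * E := by positivity
      nlinarith [e2, mul_le_mul_of_nonneg_left hkey hpos.le]
  calc -(μ ^ (s + 1) / (1 - μ)) ≤ (g 0 - g (s+1)) / (1 - μ) := by
        rw [← neg_div]
        apply (div_le_div_iff_of_pos_right h1μ).mpr
        have hg0 : 0 ≤ g 0 := (hgpos 0).le
        have hgs : g (s+1) ≤ μ ^ (s+1) := by
          simp only [hg]
          have h1 : (p:ℝ) ^ (-(b * max ((k:ℝ) - ((s+1:ℕ):ℝ) * (l:ℝ)) 0)) ≤ 1 := by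
            apply Real.rpow_le_one_of_one_le_of_nonpos (le_of_lt hp1)
            have : 0 ≤ max ((k:ℝ) - ((s+1:ℕ):ℝ) * (l:ℝ)) 0 := le_max_right _ _
            nlinarith
          nlinarith [pow_pos hμ0 (s+1)]
        linarith
    _ = ∑ j ∈ Finset.range (s+1), (g j - g (j+1)) / (1 - μ) := by
        rw [← Finset.sum_div, Finset.sum_range_sub']
    _ ≤ ∑ j ∈ Finset.range (s+1), μ ^ j * taustar a b l p j k :=
        Finset.sum_le_sum fun j _ => hterm j
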